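/- Turán-type bound for closed interval graphs: if S is a multiset of n closed intervals over the integers such that no p+1 of them are pairwise intersecting (p ≥ 1), then the number of unordered pairs of distinct indices whose intervals intersect is at most n(p−1). -/
import Mathlib


/-- Turán-type bound for closed interval graphs: if among `n` closed integer
intervals `[x i, y i]` no `p+1` are pairwise intersecting (`p ≥ 1`), then the
number of unordered pairs of distinct indices whose intervals intersect is at
most `n(p-1)`. -/
theorem interval_graph_edge_bound (n p : ℕ) (hp : 1 ≤ p)
    (x y : Fin n → ℤ) (hxy : ∀ i, x i ≤ y i)
    (h : ∀ T : Finset (Fin n),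
      (∀ i ∈ T, ∀ j ∈ T, x i ≤ y j ∧ x j ≤ y i) → T.card ≤ p) :
    (Finset.univ.filter (fun q : Fin n × Fin n =>
      q.1 < q.2 ∧ x q.1 ≤ y q.2 ∧ x q.2 ≤ y q.1)).card ≤ n * (p - 1) := by
  classical
  set E := Finset.univ.filter (fun q : Fin n × Fin n =>
      q.1 < q.2 ∧ x q.1 ≤ y q.2 ∧ x q.2 ≤ y q.1) with hEdef
  set f : Fin n × Fin n → Fin n := fun q => if x q.1 < x q.2 then q.2 else q.1 with hfdef
  set g : Fin n × Fin n → Fin n := fun q => if x q.1 < x q.2 then q.1 else q.2 with hgdef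
  have hprop : ∀ q ∈ E, x (g q) ≤ x (f q) ∧ x (f q) ≤ y (g q) ∧
      ((q.1 = g q ∧ q.2 = f q) ∨ (q.1 = f q ∧ q.2 = g q)) := by
    intro q hq
    simp only [hEdef, Finset.mem_filter, Finset.mem_univ, true_and] at hq
    obtain ⟨hlt, h1, h2⟩ := hq
    by_cases hc : x q.1 < x q.2
    · simp only [hfdef, hgdef, if_pos hc]
      exact ⟨le_of_lt hc, h2, Or.inl ⟨by simp, by simp⟩⟩
    · simp only [hfdef, hgdef, if_neg hc]
      exact ⟨le_of_not_gt hc, h1, Or.inr ⟨by simp, by simp⟩⟩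
  have key : ∀ v : Fin n, (E.filter (fun q => f q = v)).card ≤ p - 1 := by
    intro v
    set F := E.filter (fun q => f q = v) with hFdef
    have hmemF : ∀ q ∈ F, q ∈ E ∧ f q = v := by
      intro q hq; simpa [hFdef] using hq
    -- the other endpoints, image of g
    have hne : ∀ q ∈ F, g q ≠ v := by
      intro q hq hgv
      obtain ⟨hqE, hfv⟩ := hmemF q hq
      obtain ⟨_, _, hor⟩ := hprop q hqE
      have hlt : q.1 < q.2 := by
        have := (Finset.mem_filter.mp hqE).2; exact this.1
      rcases hor with ⟨h1, h2⟩ | ⟨h1, h2⟩ <;>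
        · rw [h1, h2] at hlt; rw [hgv, hfv] at hlt; exact lt_irrefl _ hlt
    have hinj : Set.InjOn g F := by
      intro q hq q' hq' hgg
      obtain ⟨hqE, hfv⟩ := hmemF q hq
      obtain ⟨hq'E, hfv'⟩ := hmemF q' hq'
      obtain ⟨_, _, hor⟩ := hprop q hqE
      obtain ⟨_, _, hor'⟩ := hprop q' hq'E
      have hlt : q.1 < q.2 := (Finset.mem_filter.mp hqE).2.1
      have hlt' : q'.1 < q'.2 := (Finset.mem_filter.mp hq'E).2.1
      rcases hor with ⟨h1, h2⟩ | ⟨h1, h2⟩ <;> rcases hor' with ⟨h1', h2'⟩ | ⟨h1', h2'⟩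
      · exact Prod.ext (by rw [h1, h1', hgg]) (by rw [h2, h2', hfv, hfv'])
      · exfalso
        rw [h1, h2, hgg, hfv] at hlt
        rw [h1', h2', hfv'] at hlt'
        exact lt_asymm hlt hlt'
      · exfalso
        rw [h1, h2, hfv, hgg] at hlt
        rw [h1', h2', hfv'] at hlt'
        exact lt_asymm hlt' hlt
      · exact Prod.ext (by rw [h1, h1', hfv, hfv']) (by rw [h2, h2', hgg])
    set T : Finset (Fin n) := insert v (F.image g) with hTdef
    have hpoint : ∀ k ∈ T, x k ≤ x v ∧ x v ≤ y k := by
      intro k hk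
      rw [hTdef, Finset.mem_insert] at hk
      rcases hk with rfl | hk
      · exact ⟨le_refl _, hxy _⟩
      · obtain ⟨q, hqF, rfl⟩ := Finset.mem_image.mp hk
        obtain ⟨hqE, hfv⟩ := hmemF q hqF
        obtain ⟨ha, hb, _⟩ := hprop q hqE
        rw [hfv] at ha hb
        exact ⟨ha, hb⟩
    have hclique : T.card ≤ p := by
      apply h
      intro i hi j hj
      obtain ⟨hi1, hi2⟩ := hpoint i hi
      obtain ⟨hj1, hj2⟩ := hpoint j hj
      exact ⟨le_trans hi1 hj2, le_trans hj1 hi2⟩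
    have hvT : v ∉ F.image g := by
      intro hv
      obtain ⟨q, hqF, hgv⟩ := Finset.mem_image.mp hv
      exact hne q hqF hgv
    have hcard : T.card = (F.image g).card + 1 := by
      rw [hTdef, Finset.card_insert_of_notMem hvT]
    have himg : (F.image g).card = F.card := Finset.card_image_of_injOn hinj
    omega
  have hfib : E.card = ∑ v : Fin n, (E.filter (fun q => f q = v)).card := by
    apply Finset.card_eq_sum_card_fiberwise
    intro q _; exact Finset.mem_univ _
  calc E.card = ∑ v : Fin n, (E.filter (fun q => f q = v)).card := hfib
    _ ≤ ∑ _v : Fin n, (p - 1) := Finset.sum_le_sum (fun v _ => key v)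
    _ = n * (p - 1) := by simp [Finset.sum_const, Finset.card_univ]
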